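/- arXiv:2601.10764 — 2 statements merged into one kernel-verified Lean document; each statement's English description precedes it below -/
import Mathlib

section
/- Let $L>0$, let $S=[-L,L]^2$ and $D=\{(x,y)\in\mathbb{R}^2 : |x|+|y|\le L\}$. Suppose $f:\mathbb{R}^2\to\mathbb{C}$ is integrable on $S$ and satisfies $f(x,y)=f(x+L,y+L)=f(x+L,y-L)=f(x-L,y-L)=f(x-L,y+L)$ for all $(x,y)\in\mathbb{R}^2$. Then $\iint_{S\setminus D} f(x,y)\,dx\,dy = \iint_{D} f(x,y)\,dx\,dy$. -/
open MeasureTheory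

namespace SqDiamondAux

/-- Translation invariance of set integrals of a periodic-type function. -/
lemma shift_integral (f : ℝ × ℝ → ℂ) (v : ℝ × ℝ) (hfv : ∀ p : ℝ × ℝ, f (p + v) = f p)
    (A : Set (ℝ × ℝ)) (hA : MeasurableSet A) :
    ∫ p in (· + v) ⁻¹' A, f p = ∫ p in A, f p := by
  have h := (measurePreserving_add_right (volume : Measure (ℝ × ℝ)) v).setIntegral_preimage_emb
    (MeasurableEquiv.addRight v).measurableEmbedding f A
  calc ∫ p in (· + v) ⁻¹' A, f p = ∫ p in (· + v) ⁻¹' A, f (p + v) := by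
        refine setIntegral_congr_fun ?_ fun p _ => (hfv p).symm
        exact hA.preimage (measurable_add_const v)
    _ = ∫ p in A, f p := h

lemma vert_null (c : ℝ) : (volume : Measure (ℝ × ℝ)) {p : ℝ × ℝ | p.1 = c} = 0 := by
  have h : {p : ℝ × ℝ | p.1 = c} = ({c} : Set ℝ) ×ˢ (Set.univ : Set ℝ) := by
    ext p; simp only [Set.mem_setOf_eq, Set.mem_prod, Set.mem_singleton_iff,
      Set.mem_univ, and_true, eq_comm]
  rw [h, Measure.volume_eq_prod ℝ ℝ, Measure.prod_prod]
  simp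

lemma horiz_null (c : ℝ) : (volume : Measure (ℝ × ℝ)) {p : ℝ × ℝ | p.2 = c} = 0 := by
  have h : {p : ℝ × ℝ | p.2 = c} = (Set.univ : Set ℝ) ×ˢ ({c} : Set ℝ) := by
    ext p; simp only [Set.mem_setOf_eq, Set.mem_prod, Set.mem_singleton_iff,
      Set.mem_univ, true_and, eq_comm]
  rw [h, Measure.volume_eq_prod ℝ ℝ, Measure.prod_prod]
  simp

lemma slant_null (a c : ℝ) (ha : a ≠ 0) :
    (volume : Measure (ℝ × ℝ)) {p : ℝ × ℝ | p.1 + a * p.2 = c} = 0 := by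
  have hs : MeasurableSet {p : ℝ × ℝ | p.1 + a * p.2 = c} :=
    measurableSet_eq_fun (measurable_fst.add (measurable_const.mul measurable_snd))
      measurable_const
  rw [Measure.volume_eq_prod ℝ ℝ, Measure.measure_prod_null hs]
  refine Filter.Eventually.of_forall fun x => ?_
  have h : Prod.mk x ⁻¹' {p : ℝ × ℝ | p.1 + a * p.2 = c} = {(c - x) / a} := by
    ext y
    simp only [Set.mem_preimage, Set.mem_setOf_eq, Set.mem_singleton_iff]
    rw [eq_div_iff ha]
    constructor <;> intro h <;> linarith
  simp [h]

end SqDiamondAux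

open SqDiamondAux

theorem integral_square_diff_diamond_eq_integral_diamond (L : ℝ) (hL : 0 < L)
    (f : ℝ × ℝ → ℂ)
    (hf : IntegrableOn f (Set.Icc (-L) L ×ˢ Set.Icc (-L) L) volume)
    (h1 : ∀ x y : ℝ, f (x, y) = f (x + L, y + L))
    (h2 : ∀ x y : ℝ, f (x, y) = f (x + L, y - L))
    (h3 : ∀ x y : ℝ, f (x, y) = f (x - L, y - L))
    (h4 : ∀ x y : ℝ, f (x, y) = f (x - L, y + L)) :
    ∫ p in (Set.Icc (-L) L ×ˢ Set.Icc (-L) L) \ {p : ℝ × ℝ | |p.1| + |p.2| ≤ L}, f p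
      = ∫ p in {p : ℝ × ℝ | |p.1| + |p.2| ≤ L}, f p := by
  set S : Set (ℝ × ℝ) := Set.Icc (-L) L ×ˢ Set.Icc (-L) L with hS_def
  set D : Set (ℝ × ℝ) := {p : ℝ × ℝ | |p.1| + |p.2| ≤ L} with hD_def
  set C1 : Set (ℝ × ℝ) := S ∩ {p | L < p.1 + p.2} with hC1_def
  set C2 : Set (ℝ × ℝ) := S ∩ {p | L < p.1 - p.2} with hC2_def
  set C3 : Set (ℝ × ℝ) := S ∩ {p | L < p.2 - p.1} with hC3_def
  set C4 : Set (ℝ × ℝ) := S ∩ {p | L < -p.1 - p.2} with hC4_def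
  set Q1 : Set (ℝ × ℝ) := {p | p.1 ≤ 0 ∧ p.2 ≤ 0 ∧ -L < p.1 + p.2} with hQ1_def
  set Q2 : Set (ℝ × ℝ) := {p | p.1 ≤ 0 ∧ 0 ≤ p.2 ∧ p.2 - p.1 < L} with hQ2_def
  set Q3 : Set (ℝ × ℝ) := {p | 0 ≤ p.1 ∧ p.2 ≤ 0 ∧ p.1 - p.2 < L} with hQ3_def
  set Q4 : Set (ℝ × ℝ) := {p | 0 ≤ p.1 ∧ 0 ≤ p.2 ∧ p.1 + p.2 < L} with hQ4_def
  -- measurability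
  have mS : MeasurableSet S := measurableSet_Icc.prod measurableSet_Icc
  have mC1 : MeasurableSet C1 :=
    mS.inter (measurableSet_lt measurable_const (measurable_fst.add measurable_snd))
  have mC2 : MeasurableSet C2 :=
    mS.inter (measurableSet_lt measurable_const (measurable_fst.sub measurable_snd))
  have mC3 : MeasurableSet C3 :=
    mS.inter (measurableSet_lt measurable_const (measurable_snd.sub measurable_fst))
  have mC4 : MeasurableSet C4 :=
    mS.inter (measurableSet_lt measurable_const (measurable_fst.neg.sub measurable_snd))
  have mQ1 : MeasurableSet Q1 :=
    (measurableSet_le measurable_fst measurable_const).inter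
      ((measurableSet_le measurable_snd measurable_const).inter
        (measurableSet_lt measurable_const (measurable_fst.add measurable_snd)))
  have mQ2 : MeasurableSet Q2 :=
    (measurableSet_le measurable_fst measurable_const).inter
      ((measurableSet_le measurable_const measurable_snd).inter
        (measurableSet_lt (measurable_snd.sub measurable_fst) measurable_const))
  have mQ3 : MeasurableSet Q3 :=
    (measurableSet_le measurable_const measurable_fst).inter
      ((measurableSet_le measurable_snd measurable_const).inter
        (measurableSet_lt (measurable_fst.sub measurable_snd) measurable_const))
  have mQ4 : MeasurableSet Q4 :=
    (measurableSet_le measurable_const measurable_fst).inter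
      ((measurableSet_le measurable_const measurable_snd).inter
        (measurableSet_lt (measurable_fst.add measurable_snd) measurable_const))
  -- subsets / integrability
  have hDS : D ⊆ S := by
    intro p hp
    simp only [hD_def, Set.mem_setOf_eq] at hp
    have h1 := abs_nonneg p.1
    have h2 := abs_nonneg p.2
    have a1 := le_abs_self p.1
    have a2 := le_abs_self p.2
    have b1 := neg_abs_le p.1
    have b2 := neg_abs_le p.2
    exact ⟨⟨by linarith, by linarith⟩, ⟨by linarith, by linarith⟩⟩
  have hfD : IntegrableOn f D := hf.mono_set hDS
  have hQ1D : Q1 ⊆ D := by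
    rintro p ⟨a, b, c⟩
    simp only [hD_def, Set.mem_setOf_eq, abs_of_nonpos a, abs_of_nonpos b]
    linarith
  have hQ2D : Q2 ⊆ D := by
    rintro p ⟨a, b, c⟩
    simp only [hD_def, Set.mem_setOf_eq, abs_of_nonpos a, abs_of_nonneg b]
    linarith
  have hQ3D : Q3 ⊆ D := by
    rintro p ⟨a, b, c⟩
    simp only [hD_def, Set.mem_setOf_eq, abs_of_nonneg a, abs_of_nonpos b]
    linarith
  have hQ4D : Q4 ⊆ D := by
    rintro p ⟨a, b, c⟩
    simp only [hD_def, Set.mem_setOf_eq, abs_of_nonneg a, abs_of_nonneg b]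
    linarith
  have iC1 : IntegrableOn f C1 := hf.mono_set Set.inter_subset_left
  have iC2 : IntegrableOn f C2 := hf.mono_set Set.inter_subset_left
  have iC3 : IntegrableOn f C3 := hf.mono_set Set.inter_subset_left
  have iC4 : IntegrableOn f C4 := hf.mono_set Set.inter_subset_left
  have iQ1 : IntegrableOn f Q1 := hfD.mono_set hQ1D
  have iQ2 : IntegrableOn f Q2 := hfD.mono_set hQ2D
  have iQ3 : IntegrableOn f Q3 := hfD.mono_set hQ3D
  have iQ4 : IntegrableOn f Q4 := hfD.mono_set hQ4D
  -- decomposition of S \ D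
  have hSD : S \ D = ((C1 ∪ C2) ∪ C3) ∪ C4 := by
    ext p
    simp only [hS_def, hD_def, hC1_def, hC2_def, hC3_def, hC4_def, Set.mem_diff,
      Set.mem_union, Set.mem_inter_iff, Set.mem_setOf_eq, Set.mem_prod, Set.mem_Icc, not_le]
    constructor
    · rintro ⟨hp, hd⟩
      rcases abs_cases p.1 with ⟨e1, _⟩ | ⟨e1, _⟩ <;> rcases abs_cases p.2 with ⟨e2, _⟩ | ⟨e2, _⟩
      · exact Or.inl (Or.inl (Or.inl ⟨hp, by linarith⟩))
      · exact Or.inl (Or.inl (Or.inr ⟨hp, by linarith⟩))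
      · exact Or.inl (Or.inr ⟨hp, by linarith⟩)
      · exact Or.inr ⟨hp, by linarith⟩
    · have a1 := le_abs_self p.1
      have a2 := le_abs_self p.2
      have b1 := neg_abs_le p.1
      have b2 := neg_abs_le p.2
      rintro (((⟨h, h'⟩ | ⟨h, h'⟩) | ⟨h, h'⟩) | ⟨h, h'⟩) <;> exact ⟨h, by linarith⟩
  -- disjointness of the corners
  have dC12 : Disjoint C1 C2 := by
    rw [Set.disjoint_left]
    rintro p ⟨⟨⟨a, b⟩, ⟨c, d⟩⟩, h⟩ ⟨_, h'⟩
    simp only [Set.mem_setOf_eq] at h h'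
    linarith
  have dC13 : Disjoint C1 C3 := by
    rw [Set.disjoint_left]
    rintro p ⟨⟨⟨a, b⟩, ⟨c, d⟩⟩, h⟩ ⟨_, h'⟩
    simp only [Set.mem_setOf_eq] at h h'
    linarith
  have dC23 : Disjoint C2 C3 := by
    rw [Set.disjoint_left]
    rintro p ⟨⟨⟨a, b⟩, ⟨c, d⟩⟩, h⟩ ⟨_, h'⟩
    simp only [Set.mem_setOf_eq] at h h'
    linarith
  have dC14 : Disjoint C1 C4 := by
    rw [Set.disjoint_left]
    rintro p ⟨⟨⟨a, b⟩, ⟨c, d⟩⟩, h⟩ ⟨_, h'⟩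
    simp only [Set.mem_setOf_eq] at h h'
    linarith
  have dC24 : Disjoint C2 C4 := by
    rw [Set.disjoint_left]
    rintro p ⟨⟨⟨a, b⟩, ⟨c, d⟩⟩, h⟩ ⟨_, h'⟩
    simp only [Set.mem_setOf_eq] at h h'
    linarith
  have dC34 : Disjoint C3 C4 := by
    rw [Set.disjoint_left]
    rintro p ⟨⟨⟨a, b⟩, ⟨c, d⟩⟩, h⟩ ⟨_, h'⟩
    simp only [Set.mem_setOf_eq] at h h'
    linarith
  -- translation identities
  have key1 : ∫ p in C1, f p = ∫ p in Q1, f p := by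
    have hfv : ∀ p : ℝ × ℝ, f (p + ((L, L) : ℝ × ℝ)) = f p := fun p => (h1 p.1 p.2).symm
    have hpre : (· + ((L, L) : ℝ × ℝ)) ⁻¹' C1 = Q1 := by
      ext p
      simp only [hC1_def, hS_def, hQ1_def, Set.mem_preimage, Set.mem_inter_iff, Set.mem_prod,
        Set.mem_Icc, Set.mem_setOf_eq, Prod.fst_add, Prod.snd_add]
      constructor
      · rintro ⟨⟨⟨a, b⟩, ⟨c, d⟩⟩, e⟩
        exact ⟨by linarith, by linarith, by linarith⟩
      · rintro ⟨a, b, c⟩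
        exact ⟨⟨⟨by linarith, by linarith⟩, ⟨by linarith, by linarith⟩⟩, by linarith⟩
    rw [← hpre, shift_integral f _ hfv _ mC1]
  have key2 : ∫ p in C2, f p = ∫ p in Q2, f p := by
    have hfv : ∀ p : ℝ × ℝ, f (p + ((L, -L) : ℝ × ℝ)) = f p := by
      intro p
      have := h2 p.1 p.2
      exact (by simpa [sub_eq_add_neg] using this.symm : f (p.1 + L, p.2 + -L) = f p)
    have hpre : (· + ((L, -L) : ℝ × ℝ)) ⁻¹' C2 = Q2 := by
      ext p
      simp only [hC2_def, hS_def, hQ2_def, Set.mem_preimage, Set.mem_inter_iff, Set.mem_prod,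
        Set.mem_Icc, Set.mem_setOf_eq, Prod.fst_add, Prod.snd_add]
      constructor
      · rintro ⟨⟨⟨a, b⟩, ⟨c, d⟩⟩, e⟩
        exact ⟨by linarith, by linarith, by linarith⟩
      · rintro ⟨a, b, c⟩
        exact ⟨⟨⟨by linarith, by linarith⟩, ⟨by linarith, by linarith⟩⟩, by linarith⟩
    rw [← hpre, shift_integral f _ hfv _ mC2]
  have key3 : ∫ p in C3, f p = ∫ p in Q3, f p := by
    have hfv : ∀ p : ℝ × ℝ, f (p + ((-L, L) : ℝ × ℝ)) = f p := by
      intro p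
      have := h4 p.1 p.2
      exact (by simpa [sub_eq_add_neg] using this.symm : f (p.1 + -L, p.2 + L) = f p)
    have hpre : (· + ((-L, L) : ℝ × ℝ)) ⁻¹' C3 = Q3 := by
      ext p
      simp only [hC3_def, hS_def, hQ3_def, Set.mem_preimage, Set.mem_inter_iff, Set.mem_prod,
        Set.mem_Icc, Set.mem_setOf_eq, Prod.fst_add, Prod.snd_add]
      constructor
      · rintro ⟨⟨⟨a, b⟩, ⟨c, d⟩⟩, e⟩
        exact ⟨by linarith, by linarith, by linarith⟩
      · rintro ⟨a, b, c⟩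
        exact ⟨⟨⟨by linarith, by linarith⟩, ⟨by linarith, by linarith⟩⟩, by linarith⟩
    rw [← hpre, shift_integral f _ hfv _ mC3]
  have key4 : ∫ p in C4, f p = ∫ p in Q4, f p := by
    have hfv : ∀ p : ℝ × ℝ, f (p + ((-L, -L) : ℝ × ℝ)) = f p := by
      intro p
      have := h3 p.1 p.2
      exact (by simpa [sub_eq_add_neg] using this.symm : f (p.1 + -L, p.2 + -L) = f p)
    have hpre : (· + ((-L, -L) : ℝ × ℝ)) ⁻¹' C4 = Q4 := by
      ext p
      simp only [hC4_def, hS_def, hQ4_def, Set.mem_preimage, Set.mem_inter_iff, Set.mem_prod,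
        Set.mem_Icc, Set.mem_setOf_eq, Prod.fst_add, Prod.snd_add]
      constructor
      · rintro ⟨⟨⟨a, b⟩, ⟨c, d⟩⟩, e⟩
        exact ⟨by linarith, by linarith, by linarith⟩
      · rintro ⟨a, b, c⟩
        exact ⟨⟨⟨by linarith, by linarith⟩, ⟨by linarith, by linarith⟩⟩, by linarith⟩
    rw [← hpre, shift_integral f _ hfv _ mC4]
  -- a.e. decomposition of D
  have hUD : ((Q1 ∪ Q2) ∪ Q3) ∪ Q4 ⊆ D := by
    intro p hp
    rcases hp with ((h | h) | h) | h
    · exact hQ1D h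
    · exact hQ2D h
    · exact hQ3D h
    · exact hQ4D h
  have hDdiff : D \ (((Q1 ∪ Q2) ∪ Q3) ∪ Q4) ⊆
      ({p : ℝ × ℝ | p.1 + 1 * p.2 = L} ∪ {p : ℝ × ℝ | p.1 + 1 * p.2 = -L}) ∪
      ({p : ℝ × ℝ | p.1 + (-1) * p.2 = L} ∪ {p : ℝ × ℝ | p.1 + (-1) * p.2 = -L}) := by
    rintro p ⟨hpD, hpU⟩
    simp only [hD_def, Set.mem_setOf_eq] at hpD
    simp only [hQ1_def, hQ2_def, hQ3_def, hQ4_def, Set.mem_union, Set.mem_setOf_eq, not_or] at hpU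
    obtain ⟨⟨⟨n1, n2⟩, n3⟩, n4⟩ := hpU
    simp only [Set.mem_union, Set.mem_setOf_eq]
    by_cases hx : 0 ≤ p.1 <;> by_cases hy : 0 ≤ p.2
    · rw [abs_of_nonneg hx, abs_of_nonneg hy] at hpD
      have : ¬ p.1 + p.2 < L := fun h => n4 ⟨hx, hy, h⟩
      exact Or.inl (Or.inl (by linarith))
    · push_neg at hy
      rw [abs_of_nonneg hx, abs_of_neg hy] at hpD
      have : ¬ p.1 - p.2 < L := fun h => n3 ⟨hx, le_of_lt hy, h⟩
      exact Or.inr (Or.inl (by linarith))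
    · push_neg at hx
      rw [abs_of_neg hx, abs_of_nonneg hy] at hpD
      have : ¬ p.2 - p.1 < L := fun h => n2 ⟨le_of_lt hx, hy, h⟩
      exact Or.inr (Or.inr (by linarith))
    · push_neg at hx; push_neg at hy
      rw [abs_of_neg hx, abs_of_neg hy] at hpD
      have : ¬ -L < p.1 + p.2 := fun h => n1 ⟨le_of_lt hx, le_of_lt hy, h⟩
      exact Or.inl (Or.inr (by linarith))
  have hnullDiff : volume (D \ (((Q1 ∪ Q2) ∪ Q3) ∪ Q4)) = 0 := by
    refine measure_mono_null hDdiff ?_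
    refine measure_union_null (measure_union_null ?_ ?_) (measure_union_null ?_ ?_)
    · exact slant_null 1 L one_ne_zero
    · exact slant_null 1 (-L) one_ne_zero
    · exact slant_null (-1) L (by norm_num)
    · exact slant_null (-1) (-L) (by norm_num)
  have hDU : D =ᵐ[volume] ((((Q1 ∪ Q2) ∪ Q3) ∪ Q4 : Set (ℝ × ℝ))) := by
    rw [MeasureTheory.ae_eq_set]
    constructor
    · exact hnullDiff
    · rw [Set.diff_eq_empty.mpr hUD]; exact measure_empty
  -- a.e. disjointness of the Q pieces
  have d12 : AEDisjoint volume Q1 Q2 := by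
    refine measure_mono_null ?_ (horiz_null 0)
    rintro p ⟨⟨_, a, _⟩, ⟨_, b, _⟩⟩
    exact le_antisymm a b
  have d12_3 : AEDisjoint volume (Q1 ∪ Q2) Q3 := by
    refine measure_mono_null ?_ (vert_null 0)
    rintro p ⟨(⟨a, _, _⟩ | ⟨a, _, _⟩), ⟨b, _, _⟩⟩ <;> exact le_antisymm a b
  have d123_4 : AEDisjoint volume ((Q1 ∪ Q2) ∪ Q3) Q4 := by
    refine measure_mono_null (fun p hp => ?_)
      (measure_union_null (vert_null 0) (horiz_null 0))
    obtain ⟨(⟨a1, a2, _⟩ | ⟨a1, a2, _⟩) | ⟨a1, a2, _⟩, ⟨b1, b2, _⟩⟩ := hp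
    · exact Or.inl (le_antisymm a1 b1)
    · exact Or.inl (le_antisymm a1 b1)
    · exact Or.inr (le_antisymm a2 b2)
  -- assemble
  calc ∫ p in S \ D, f p
      = ∫ p in ((C1 ∪ C2) ∪ C3) ∪ C4, f p := by rw [hSD]
    _ = (((∫ p in C1, f p) + ∫ p in C2, f p) + ∫ p in C3, f p) + ∫ p in C4, f p := by
        rw [setIntegral_union (Set.disjoint_union_left.2
              ⟨Set.disjoint_union_left.2 ⟨dC14, dC24⟩, dC34⟩) mC4
            ((iC1.union iC2).union iC3) iC4,
          setIntegral_union (Set.disjoint_union_left.2 ⟨dC13, dC23⟩) mC3 (iC1.union iC2) iC3,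
          setIntegral_union dC12 mC2 iC1 iC2]
    _ = (((∫ p in Q1, f p) + ∫ p in Q2, f p) + ∫ p in Q3, f p) + ∫ p in Q4, f p := by
        rw [key1, key2, key3, key4]
    _ = ∫ p in ((Q1 ∪ Q2) ∪ Q3) ∪ Q4, f p := by
        rw [integral_union_ae d123_4 mQ4.nullMeasurableSet ((iQ1.union iQ2).union iQ3) iQ4,
          integral_union_ae d12_3 mQ3.nullMeasurableSet (iQ1.union iQ2) iQ3,
          integral_union_ae d12 mQ2.nullMeasurableSet iQ1 iQ2]
    _ = ∫ p in D, f p := (setIntegral_congr_set hDU.symm)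
end

section
/- Let $A,B,C,D\in\mathbb{R}$. Then $\int_{-\pi}^{\pi}\int_{-\pi}^{\pi} \exp\big(A\cos(u+v)+B\sin(u+v)+C\cos(u-v)+D\sin(u-v)\big)\,du\,dv = \Big(\int_{-\pi}^{\pi} e^{\sqrt{A^2+B^2}\,\cos t}\,dt\Big)\Big(\int_{-\pi}^{\pi} e^{\sqrt{C^2+D^2}\,\cos t}\,dt\Big)$. -/
open MeasureTheory Real

private lemma pi_le : (-π : ℝ) ≤ π := by linarith [Real.pi_pos]

private lemma icc_eq (h : ℝ → ℝ) :
    (∫ t in Set.Icc (-π) π, h t) = ∫ t in (-π)..π, h t := by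
  rw [MeasureTheory.integral_Icc_eq_integral_Ioc, intervalIntegral.integral_of_le pi_le]

private lemma per1 {f : ℝ → ℝ} (hfp : Function.Periodic f (2*π)) (t : ℝ) :
    (∫ x in t..(t + 2*π), f x) = ∫ x in (-π)..π, f x := by
  have := hfp.intervalIntegral_add_eq t (-π)
  rwa [show -π + 2*π = π by ring] at this

private lemma per1' {f : ℝ → ℝ} (hfp : Function.Periodic f (2*π)) (t : ℝ) :
    (∫ x in (t - 2*π)..t, f x) = ∫ x in (-π)..π, f x := by
  have := per1 hfp (t - 2*π)
  rwa [show t - 2*π + 2*π = t by ring] at this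

private lemma sep (f g : ℝ → ℝ) (hf : Continuous f) (hg : Continuous g)
    (hfp : Function.Periodic f (2*π)) (hgp : Function.Periodic g (2*π)) :
    (∫ u in Set.Icc (-π) π, ∫ v in Set.Icc (-π) π, f (u+v) * g (u-v))
      = (∫ t in Set.Icc (-π) π, f t) * ∫ t in Set.Icc (-π) π, g t := by
  have stepA : ∀ u : ℝ, (∫ v in Set.Icc (-π) π, f (u+v) * g (u-v))
      = ∫ w in Set.Icc (-π) π, f (2*u + w) * g (-w) := by
    intro u
    rw [icc_eq, icc_eq]
    have e1 : (∫ v in (-π)..π, f (u+v) * g (u-v))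
        = ∫ v in (-π)..π, (fun w => f (2*u+w) * g (-w)) (v + (-u)) := by
      apply intervalIntegral.integral_congr; intro v _
      simp only []
      rw [show 2*u + (v + -u) = u + v by ring, show -(v + -u) = u - v by ring]
    rw [e1, intervalIntegral.integral_comp_add_right (fun w => f (2*u+w) * g (-w)) (-u)]
    have hK : Function.Periodic (fun w => f (2*u+w) * g (-w)) (2*π) := by
      intro x
      simp only []
      rw [show 2*u + (x + 2*π) = (2*u + x) + 2*π by ring, hfp,
        show -(x + 2*π) = -x - 2*π by ring, hgp.sub_eq]
    have := hK.intervalIntegral_add_eq (-π + -u) (-π)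
    rwa [show -π + -u + 2*π = π + -u by ring, show -π + 2*π = π by ring] at this
  rw [MeasureTheory.integral_congr_ae (Filter.Eventually.of_forall stepA)]
  have huncurry : Function.uncurry (fun u w => f (2*u+w) * g (-w))
      = fun p : ℝ × ℝ => f (2*p.1 + p.2) * g (-p.2) := rfl
  have hint : Integrable (Function.uncurry (fun u w => f (2*u+w) * g (-w)))
      ((volume.restrict (Set.Icc (-π) π)).prod (volume.restrict (Set.Icc (-π) π))) := by
    rw [huncurry, Measure.prod_restrict]
    have hc : Continuous fun p : ℝ × ℝ => f (2*p.1 + p.2) * g (-p.2) := by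
      apply Continuous.mul
      · exact hf.comp (by continuity)
      · exact hg.comp continuous_neg.snd'
    exact hc.continuousOn.integrableOn_compact (isCompact_Icc.prod isCompact_Icc)
  rw [MeasureTheory.integral_integral_swap hint]
  have stepC : ∀ w : ℝ, (∫ u in Set.Icc (-π) π, f (2*u + w)) = ∫ t in Set.Icc (-π) π, f t := by
    intro w
    rw [icc_eq, icc_eq]
    rw [intervalIntegral.integral_comp_mul_add f two_ne_zero w]
    have e : (∫ x in (w-2*π)..w, f x) + (∫ x in w..(w+2*π), f x)
        = ∫ x in (2*(-π)+w)..(2*π+w), f x := by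
      rw [intervalIntegral.integral_add_adjacent_intervals
        (hf.intervalIntegrable _ _) (hf.intervalIntegrable _ _)]
      congr 1 <;> ring
    rw [← e, per1 hfp, per1' hfp, smul_eq_mul]
    ring
  have stepD : ∀ w : ℝ, (∫ u in Set.Icc (-π) π, f (2*u + w) * g (-w))
      = (∫ t in Set.Icc (-π) π, f t) * g (-w) := by
    intro w
    rw [MeasureTheory.integral_mul_const, stepC]
  rw [MeasureTheory.integral_congr_ae (Filter.Eventually.of_forall stepD),
    MeasureTheory.integral_const_mul]
  congr 1
  rw [icc_eq, icc_eq, show (∫ w in (-π)..π, g (-w)) = ∫ w in (-π)..π, g w from by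
    rw [intervalIntegral.integral_comp_neg g, neg_neg]]

private lemma shiftR (A B : ℝ) :
    (∫ t in Set.Icc (-π) π, Real.exp (A * Real.cos t + B * Real.sin t))
      = ∫ t in Set.Icc (-π) π, Real.exp (Real.sqrt (A ^ 2 + B ^ 2) * Real.cos t) := by
  set R := Real.sqrt (A ^ 2 + B ^ 2) with hR
  obtain ⟨φ, h1, h2⟩ : ∃ φ : ℝ, R * Real.cos φ = A ∧ R * Real.sin φ = B := by
    refine ⟨Complex.arg ⟨A, B⟩, ?_, ?_⟩
    · have h := Complex.norm_mul_cos_arg ⟨A, B⟩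
      rwa [show ‖(⟨A, B⟩ : ℂ)‖ = R from by
        rw [hR, Complex.norm_def, Complex.normSq_mk]; ring_nf] at h
    · have h := Complex.norm_mul_sin_arg ⟨A, B⟩
      rwa [show ‖(⟨A, B⟩ : ℂ)‖ = R from by
        rw [hR, Complex.norm_def, Complex.normSq_mk]; ring_nf] at h
  rw [icc_eq, icc_eq]
  have key : (∫ t in (-π)..π, Real.exp (A * Real.cos t + B * Real.sin t))
      = ∫ t in (-π)..π, (fun s => Real.exp (R * Real.cos s)) (t + (-φ)) := by
    apply intervalIntegral.integral_congr; intro t _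
    simp only []
    rw [Real.cos_add, Real.cos_neg, Real.sin_neg, ← h1, ← h2]
    ring_nf
  rw [key, intervalIntegral.integral_comp_add_right (fun s => Real.exp (R * Real.cos s)) (-φ)]
  have hper : Function.Periodic (fun s => Real.exp (R * Real.cos s)) (2*π) := by
    intro x; simp [Real.cos_add_two_pi]
  have := hper.intervalIntegral_add_eq (-π + -φ) (-π)
  rwa [show -π + -φ + 2*π = π + -φ by ring, show -π + 2*π = π by ring] at this

theorem double_integral_exp_trig_eq_product (A B C D : ℝ) :
    (∫ u in Set.Icc (-π) π, ∫ v in Set.Icc (-π) π,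
        Real.exp (A * Real.cos (u + v) + B * Real.sin (u + v)
          + C * Real.cos (u - v) + D * Real.sin (u - v)))
      = (∫ t in Set.Icc (-π) π, Real.exp (Real.sqrt (A ^ 2 + B ^ 2) * Real.cos t))
        * ∫ t in Set.Icc (-π) π, Real.exp (Real.sqrt (C ^ 2 + D ^ 2) * Real.cos t) := by
  have split : ∀ u v : ℝ, Real.exp (A * Real.cos (u + v) + B * Real.sin (u + v)
      + C * Real.cos (u - v) + D * Real.sin (u - v))
      = Real.exp (A * Real.cos (u+v) + B * Real.sin (u+v))
        * Real.exp (C * Real.cos (u-v) + D * Real.sin (u-v)) := by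
    intro u v
    rw [← Real.exp_add]
    ring_nf
  simp_rw [split]
  rw [sep (fun t => Real.exp (A * Real.cos t + B * Real.sin t))
      (fun t => Real.exp (C * Real.cos t + D * Real.sin t))
      (by continuity) (by continuity)
      (fun x => by simp [Real.cos_add_two_pi, Real.sin_add_two_pi])
      (fun x => by simp [Real.cos_add_two_pi, Real.sin_add_two_pi])]
  rw [shiftR A B, shiftR C D]
end
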